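/- Let θ ∈ ℝ be fixed, b ~ N(0, A), and conditional on b let (θ̂ᵇ, b̂) be independent with θ̂ᵇ ~ N(θ + b, σ²) and b̂ ~ N(b, τ²). Define the rebiased estimator θ̂ʳᵇ = θ̂ᵇ − (A/(A+τ²)) b̂. Then, marginally (integrating over b), θ̂ʳᵇ − θ ~ N(0, σ² + Aτ²/(A+τ²)). -/

import Mathlib

open MeasureTheory ProbabilityTheory NNReal
open Real Complex

lemma integrable_rexp_quadratic' {b : ℝ} (hb : b < 0) (c d : ℝ) :
    Integrable fun x : ℝ => rexp (b * x ^ 2 + c * x + d) := by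
  have h := (integrable_cexp_quadratic' (b := (b : ℂ)) (by simpa using hb) c d).norm
  refine h.congr (Filter.Eventually.of_forall fun x => ?_)
  show ‖cexp ((b : ℂ) * x ^ 2 + c * x + d)‖ = _
  rw [show ((b : ℂ) * x ^ 2 + c * x + d) = ((b * x ^ 2 + c * x + d : ℝ) : ℂ) by push_cast; ring,
    ← Complex.ofReal_exp, Complex.norm_real, Real.norm_eq_abs, abs_of_pos (Real.exp_pos _)]

lemma integral_rexp_quadratic' {b : ℝ} (hb : b < 0) (c d : ℝ) :
    ∫ x : ℝ, rexp (b * x ^ 2 + c * x + d)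
      = Real.sqrt (π / -b) * rexp (d - c ^ 2 / (4 * b)) := by
  have h := integral_cexp_quadratic (b := (b : ℂ)) (by simpa using hb) (c : ℂ) (d : ℂ)
  have h1 : ∫ x : ℝ, cexp ((b : ℂ) * x ^ 2 + c * x + d)
      = ((∫ x : ℝ, rexp (b * x ^ 2 + c * x + d) : ℝ) : ℂ) := by
    have e : ∀ x : ℝ, cexp ((b : ℂ) * x ^ 2 + c * x + d)
        = ((rexp (b * x ^ 2 + c * x + d) : ℝ) : ℂ) := fun x => by
      rw [show ((b : ℂ) * x ^ 2 + c * x + d) = ((b * x ^ 2 + c * x + d : ℝ) : ℂ) by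
        push_cast; ring, Complex.ofReal_exp]
    simp_rw [e]
    exact integral_ofReal
  have h2 : ((π : ℂ) / -(b : ℂ)) ^ (1 / 2 : ℂ) = ((Real.sqrt (π / -b) : ℝ) : ℂ) := by
    have hpos : (0 : ℝ) ≤ π / -b := div_nonneg Real.pi_pos.le (by linarith)
    rw [show ((π : ℂ) / -(b : ℂ)) = ((π / -b : ℝ) : ℂ) by push_cast; ring,
      show (1 / 2 : ℂ) = ((1 / 2 : ℝ) : ℂ) by norm_num,
      ← Complex.ofReal_cpow hpos, Real.sqrt_eq_rpow]
  have h3 : cexp ((d : ℂ) - (c : ℂ) ^ 2 / (4 * (b : ℂ)))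
      = ((rexp (d - c ^ 2 / (4 * b)) : ℝ) : ℂ) := by
    rw [show ((d : ℂ) - (c : ℂ) ^ 2 / (4 * (b : ℂ))) = ((d - c ^ 2 / (4 * b) : ℝ) : ℂ) by
      push_cast; ring, Complex.ofReal_exp]
  rw [h1, h2, h3, ← Complex.ofReal_mul] at h
  exact_mod_cast h

lemma gaussianPDFReal_mul_eq {v1 v2 : ℝ≥0} (h1 : v1 ≠ 0) (h2 : v2 ≠ 0) (y : ℝ) :
    (fun x : ℝ => gaussianPDFReal 0 v1 x * gaussianPDFReal x v2 y)
      = fun x : ℝ => ((Real.sqrt (2 * π * v1))⁻¹ * (Real.sqrt (2 * π * v2))⁻¹) *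
          rexp (-((v1 + v2 : ℝ) / (2 * v1 * v2)) * x ^ 2 + (y / v2) * x + (-(y ^ 2) / (2 * v2))) := by
  have p1 : (0 : ℝ) < v1 := lt_of_le_of_ne (v1.coe_nonneg) (by exact_mod_cast (Ne.symm h1))
  have p2 : (0 : ℝ) < v2 := lt_of_le_of_ne (v2.coe_nonneg) (by exact_mod_cast (Ne.symm h2))
  funext x
  simp only [gaussianPDFReal]
  rw [mul_mul_mul_comm, ← Real.exp_add]
  congr 1
  field_simp
  ring

lemma quad_coeff_neg {v1 v2 : ℝ≥0} (h1 : v1 ≠ 0) (h2 : v2 ≠ 0) :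
    -(((v1 : ℝ) + v2) / (2 * v1 * v2)) < 0 := by
  have p1 : (0 : ℝ) < v1 := lt_of_le_of_ne (v1.coe_nonneg) (by exact_mod_cast (Ne.symm h1))
  have p2 : (0 : ℝ) < v2 := lt_of_le_of_ne (v2.coe_nonneg) (by exact_mod_cast (Ne.symm h2))
  have : (0 : ℝ) < ((v1 : ℝ) + v2) / (2 * v1 * v2) := by positivity
  linarith

lemma integrable_gaussianPDFReal_mul {v1 v2 : ℝ≥0} (h1 : v1 ≠ 0) (h2 : v2 ≠ 0) (y : ℝ) :
    Integrable (fun x : ℝ => gaussianPDFReal 0 v1 x * gaussianPDFReal x v2 y) := by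
  rw [gaussianPDFReal_mul_eq h1 h2 y]
  exact (integrable_rexp_quadratic' (quad_coeff_neg h1 h2) _ _).const_mul _

lemma gaussianPDFReal_conv {v1 v2 : ℝ≥0} (h1 : v1 ≠ 0) (h2 : v2 ≠ 0) (y : ℝ) :
    ∫ x : ℝ, gaussianPDFReal 0 v1 x * gaussianPDFReal x v2 y
      = gaussianPDFReal 0 (v1 + v2) y := by
  have p1 : (0 : ℝ) < v1 := lt_of_le_of_ne (v1.coe_nonneg) (by exact_mod_cast (Ne.symm h1))
  have p2 : (0 : ℝ) < v2 := lt_of_le_of_ne (v2.coe_nonneg) (by exact_mod_cast (Ne.symm h2))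
  rw [gaussianPDFReal_mul_eq h1 h2 y, MeasureTheory.integral_const_mul,
    integral_rexp_quadratic' (quad_coeff_neg h1 h2)]
  have s1 : (0 : ℝ) < Real.sqrt (2 * π * v1) := Real.sqrt_pos.mpr (by positivity)
  have s2 : (0 : ℝ) < Real.sqrt (2 * π * v2) := Real.sqrt_pos.mpr (by positivity)
  have s3 : (0 : ℝ) < Real.sqrt (2 * π * ((v1 : ℝ) + v2)) := Real.sqrt_pos.mpr (by positivity)
  have hexp : -(y ^ 2) / (2 * (v2 : ℝ)) - (y / v2) ^ 2 / (4 * -(((v1 : ℝ) + v2) / (2 * v1 * v2)))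
      = -(y - 0) ^ 2 / (2 * ((v1 : ℝ) + v2)) := by
    have hD : (0:ℝ) < (v1 : ℝ) + v2 := by positivity
    rw [show (4 * -(((v1 : ℝ) + v2) / (2 * v1 * v2)) : ℝ)
        = -((2 * ((v1 : ℝ) + v2)) / (v1 * v2)) by field_simp; ring,
      div_neg, sub_neg_eq_add, div_div_eq_mul_div]
    field_simp [p1.ne', p2.ne', hD.ne']
    ring
  have hsq : Real.sqrt (π / - -(((v1 : ℝ) + v2) / (2 * v1 * v2)))
      = Real.sqrt (2 * π * v1) * Real.sqrt (2 * π * v2) / Real.sqrt (2 * π * ((v1 : ℝ) + v2)) := by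
    rw [← Real.sqrt_mul (by positivity), ← Real.sqrt_div (by positivity)]
    congr 1
    field_simp
  rw [hexp, hsq, gaussianPDFReal]
  have hc : ((v1 + v2 : ℝ≥0) : ℝ) = (v1 : ℝ) + v2 := by push_cast; ring
  rw [hc]
  field_simp

lemma gaussianPDF_pair_measurable (v2 : ℝ≥0) :
    Measurable (fun p : ℝ × ℝ => gaussianPDF p.1 v2 p.2) := by
  apply Measurable.ennreal_ofReal
  show Measurable fun p : ℝ × ℝ =>
    (Real.sqrt (2 * π * v2))⁻¹ * rexp (-(p.2 - p.1) ^ 2 / (2 * (v2 : ℝ)))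
  fun_prop

lemma gaussianReal_conv (v1 v2 : ℝ≥0) :
    Measure.map (fun p : ℝ × ℝ => p.1 + p.2)
      ((gaussianReal 0 v1).prod (gaussianReal 0 v2)) = gaussianReal 0 (v1 + v2) := by
  by_cases h1 : v1 = 0
  · subst h1
    rw [gaussianReal_zero_var, Measure.dirac_prod,
      Measure.map_map measurable_add measurable_prodMk_left]
    simp only [Function.comp_def, zero_add]
    rw [Measure.map_id']
  by_cases h2 : v2 = 0
  · subst h2
    rw [gaussianReal_zero_var, Measure.prod_dirac,
      Measure.map_map measurable_add measurable_prodMk_right]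
    simp only [Function.comp_def, add_zero]
    rw [Measure.map_id']
  have hvm : Measurable fun p : ℝ × ℝ => p.1 + p.2 := measurable_add
  have hm2 := gaussianPDF_pair_measurable v2
  ext s hs
  rw [Measure.map_apply hvm hs, Measure.prod_apply (hvm hs)]
  have key : ∀ x : ℝ, (gaussianReal 0 v2) (Prod.mk x ⁻¹' ((fun p : ℝ × ℝ => p.1 + p.2) ⁻¹' s))
      = ∫⁻ y in s, gaussianPDF x v2 y := by
    intro x
    have hpre : Prod.mk x ⁻¹' ((fun p : ℝ × ℝ => p.1 + p.2) ⁻¹' s) = (fun y => x + y) ⁻¹' s := rfl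
    rw [hpre, ← Measure.map_apply (measurable_const_add x) hs, gaussianReal_map_const_add,
      zero_add, gaussianReal_apply _ h2]
  simp_rw [key]
  have hg : Measurable fun x => ∫⁻ y in s, gaussianPDF x v2 y :=
    Measurable.lintegral_prod_right hm2
  rw [gaussianReal_of_var_ne_zero 0 h1,
    lintegral_withDensity_eq_lintegral_mul _ (measurable_gaussianPDF 0 v1) hg]
  simp only [Pi.mul_apply]
  have hpull : ∀ x : ℝ, gaussianPDF 0 v1 x * ∫⁻ y in s, gaussianPDF x v2 y
      = ∫⁻ y in s, gaussianPDF 0 v1 x * gaussianPDF x v2 y := fun x =>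
    (lintegral_const_mul _ (hm2.comp measurable_prodMk_left)).symm
  simp_rw [hpull]
  rw [lintegral_lintegral_swap
    (((measurable_gaussianPDF 0 v1).comp measurable_fst).mul hm2).aemeasurable,
    gaussianReal_apply _ (by simp [h1]) s]
  apply lintegral_congr fun y => ?_
  simp only [gaussianPDF]
  simp_rw [← ENNReal.ofReal_mul (gaussianPDFReal_nonneg 0 v1 _)]
  rw [← ofReal_integral_eq_lintegral_ofReal (integrable_gaussianPDFReal_mul h1 h2 y)
    (Filter.Eventually.of_forall fun x =>
      mul_nonneg (gaussianPDFReal_nonneg _ _ _) (gaussianPDFReal_nonneg _ _ _)),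
    gaussianPDFReal_conv h1 h2 y]

/-- **Marginal law of the rebiased estimator.** Let `θ` be fixed, `b ~ N(0, A)`, and
conditionally on `b` let `θ̂ᵇ = θ + b + e₁` with `e₁ ~ N(0, σ²)` and `b̂ = b + e₂` with
`e₂ ~ N(0, τ²)`, the errors independent. Then, marginally,
`θ̂ʳᵇ − θ = θ̂ᵇ − (A/(A+τ²))·b̂ − θ ~ N(0, σ² + Aτ²/(A+τ²))`. -/
theorem stmt1 (θ : ℝ) (A σ2 τ2 : ℝ≥0) (hσ : 0 < σ2) (hτ : 0 < τ2) :
    Measure.map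
      (fun ω : ℝ × ℝ × ℝ =>
        ((θ + ω.1 + ω.2.1) - ((A : ℝ) / ((A : ℝ) + (τ2 : ℝ))) * (ω.1 + ω.2.2)) - θ)
      ((gaussianReal 0 A).prod ((gaussianReal 0 σ2).prod (gaussianReal 0 τ2)))
    = gaussianReal 0 (σ2 + A * τ2 / (A + τ2)) := by
  set c : ℝ := (A : ℝ) / ((A : ℝ) + (τ2 : ℝ)) with hc
  have hτ' : (0 : ℝ) < τ2 := by exact_mod_cast hτ
  have hden : (0 : ℝ) < (A : ℝ) + τ2 := by positivity
  have hg2m : Measurable ((fun p : ℝ × ℝ => p.1 + p.2) ∘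
      Prod.map (id : ℝ → ℝ) (fun y : ℝ => -c * y)) :=
    measurable_add.comp (measurable_id.prodMap (measurable_const_mul _))
  have hfun : (fun ω : ℝ × ℝ × ℝ => ((θ + ω.1 + ω.2.1) - c * (ω.1 + ω.2.2)) - θ)
      = (fun p : ℝ × ℝ => p.1 + p.2) ∘
        (Prod.map (fun x : ℝ => (1 - c) * x)
          ((fun p : ℝ × ℝ => p.1 + p.2) ∘ Prod.map (id : ℝ → ℝ) (fun y : ℝ => -c * y))) := by
    funext ω
    obtain ⟨a, b, e⟩ := ω
    simp only [Function.comp_apply, Prod.map_apply, id_eq]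
    ring
  have step1 : Measure.map (fun x : ℝ => (1 - c) * x) (gaussianReal 0 A)
      = gaussianReal 0 (NNReal.mk ((1 - c) ^ 2) (sq_nonneg _) * A) := by
    rw [gaussianReal_map_const_mul, mul_zero]
  have step2 : Measure.map ((fun p : ℝ × ℝ => p.1 + p.2) ∘
        Prod.map (id : ℝ → ℝ) (fun y : ℝ => -c * y))
        ((gaussianReal 0 σ2).prod (gaussianReal 0 τ2))
      = gaussianReal 0 (σ2 + NNReal.mk ((-c) ^ 2) (sq_nonneg _) * τ2) := by
    rw [← Measure.map_map measurable_add (measurable_id.prodMap (measurable_const_mul _)),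
      ← Measure.map_prod_map _ _ measurable_id (measurable_const_mul _),
      Measure.map_id, gaussianReal_map_const_mul, mul_zero, gaussianReal_conv]
  rw [hfun, ← Measure.map_map measurable_add ((measurable_const_mul _).prodMap hg2m),
    ← Measure.map_prod_map _ _ (measurable_const_mul _) hg2m, step1, step2, gaussianReal_conv]
  congr 1
  apply NNReal.coe_injective
  push_cast
  rw [hc]
  field_simp
  ring
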